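/- Let n ≥ 1 and let x₁,…,xₙ, y₁,…,yₙ be complex numbers such that sinh(x_j − y_k) ≠ 0 for all 1 ≤ j,k ≤ n. Then the determinant of the n×n matrix with entries 1/sinh(x_j − y_k) equals ( ∏_{n ≥ j > k ≥ 1} sinh(x_j − x_k) · sinh(y_k − y_j) ) / ( ∏_{j=1}^n ∏_{k=1}^n sinh(x_j − y_k) ). -/

import Mathlib

open Finset

private lemma det_eq_of_forall_col_eq_smul_add_const {m : Type*} [DecidableEq m] [Fintype m]
    {A B : Matrix m m ℂ} (c : m → ℂ) (k : m) (hk : c k = 0)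
    (hAB : ∀ i j, A i j = B i j + c j * B i k) : A.det = B.det := by
  rw [← Matrix.det_transpose A, ← Matrix.det_transpose B]
  exact Matrix.det_eq_of_forall_row_eq_smul_add_const c k hk (fun i j => hAB j i)

private lemma prod_ite_last {n : ℕ} (f : Fin (n + 1) → ℂ) :
    (∏ i : Fin (n + 1), (if i = Fin.last n then 1 else f i)) = ∏ i : Fin n, f i.castSucc := by
  rw [Fin.prod_univ_castSucc]
  simp [(Fin.castSucc_lt_last _).ne]

private lemma prod_filter_lt_castSucc {n : ℕ} (j : Fin n) (g : Fin (n + 1) → ℂ) :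
    (∏ k ∈ Finset.univ.filter (fun k : Fin (n+1) => k < j.castSucc), g k)
      = ∏ k ∈ Finset.univ.filter (fun k : Fin n => k < j), g k.castSucc := by
  have hs : Finset.univ.filter (fun k : Fin (n+1) => k < j.castSucc)
      = (Finset.univ.filter (fun k : Fin n => k < j)).map Fin.castSuccEmb := by
    ext k
    simp only [Finset.mem_filter, Finset.mem_univ, true_and, Finset.mem_map,
      Fin.castSuccEmb, Fin.castAddEmb, Fin.lt_def, Fin.coe_castSucc]
    constructor
    · intro hk
      have hk' : (k : ℕ) < n := lt_of_lt_of_le hk (Nat.lt_succ_iff.mp j.castSucc.isLt)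
      exact ⟨⟨(k : ℕ), hk'⟩, hk, by ext; simp⟩
    · rintro ⟨a, ha, rfl⟩
      simpa using ha
  rw [hs, Finset.prod_map]
  rfl

private lemma prod_filter_lt_last {n : ℕ} (g : Fin (n + 1) → ℂ) :
    (∏ k ∈ Finset.univ.filter (fun k : Fin (n+1) => k < Fin.last n), g k)
      = ∏ k : Fin n, g k.castSucc := by
  have hs : Finset.univ.filter (fun k : Fin (n+1) => k < Fin.last n)
      = Finset.univ.map Fin.castSuccEmb := by
    ext k
    simp only [Finset.mem_filter, Finset.mem_univ, true_and, Finset.mem_map,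
      Fin.castSuccEmb, Fin.castAddEmb, Fin.lt_def, Fin.val_last]
    constructor
    · intro hk
      exact ⟨⟨(k : ℕ), hk⟩, by ext; simp⟩
    · rintro ⟨a, _, rfl⟩
      simpa using a.isLt
  rw [hs, Finset.prod_map]
  rfl

private lemma cauchy_det (n : ℕ) (x y : Fin n → ℂ) (h : ∀ j k, x j - y k ≠ 0) :
    Matrix.det (Matrix.of fun j k => (x j - y k)⁻¹) =
      (∏ j : Fin n, ∏ k ∈ Finset.univ.filter (fun k => k < j), (x j - x k) * (y k - y j)) /
        ∏ j : Fin n, ∏ k : Fin n, (x j - y k) := by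
  induction n with
  | zero => simp [Matrix.det_fin_zero]
  | succ n ih =>
    set L : Fin (n + 1) := Fin.last n with hL
    -- Step 1: subtract last row from the others
    have step1 : Matrix.det (Matrix.of fun j k : Fin (n+1) => (x j - y k)⁻¹)
        = Matrix.det (Matrix.of fun j k : Fin (n+1) =>
            (if j = L then (1:ℂ) else (x L - x j)) *
              ((x L - y k)⁻¹ * (if j = L then (1:ℂ) else (x j - y k)⁻¹))) := by
      apply Matrix.det_eq_of_forall_row_eq_smul_add_const
        (fun i => if i = L then (0:ℂ) else 1) L (by simp)
      intro i j
      by_cases hi : i = L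
      · subst hi; simp
      · simp only [Matrix.of_apply, hi, if_neg, if_false, ↓reduceIte]
        have h1 := h i j
        have h2 := h L j
        field_simp
        ring
    -- factor out row and column multipliers
    have step2 : Matrix.det (Matrix.of fun j k : Fin (n+1) =>
            (if j = L then (1:ℂ) else (x L - x j)) *
              ((x L - y k)⁻¹ * (if j = L then (1:ℂ) else (x j - y k)⁻¹)))
        = (∏ i : Fin (n+1), (if i = L then (1:ℂ) else (x L - x i))) *
          ((∏ k : Fin (n+1), (x L - y k)⁻¹) *
            Matrix.det (Matrix.of fun j k : Fin (n+1) =>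
              (if j = L then (1:ℂ) else (x j - y k)⁻¹))) := by
      refine (Matrix.det_mul_column (fun i => if i = L then (1:ℂ) else (x L - x i))
        (Matrix.of fun j k : Fin (n+1) => (x L - y k)⁻¹ * (if j = L then (1:ℂ) else (x j - y k)⁻¹))).trans ?_
      congr 1
      exact Matrix.det_mul_row (fun k => (x L - y k)⁻¹) _
    -- Step 2: subtract last column from the others
    have step3 : Matrix.det (Matrix.of fun j k : Fin (n+1) =>
              (if j = L then (1:ℂ) else (x j - y k)⁻¹))
        = Matrix.det (Matrix.of fun i j : Fin (n+1) =>
            (if i = L then (1:ℂ) else (x i - y L)⁻¹) *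
              ((if j = L then (1:ℂ) else (y j - y L)) *
                (if i = L then (if j = L then (1:ℂ) else 0)
                  else (if j = L then (1:ℂ) else (x i - y j)⁻¹)))) := by
      apply det_eq_of_forall_col_eq_smul_add_const
        (fun j => if j = L then (0:ℂ) else 1) L (by simp)
      intro i j
      by_cases hj : j = L
      · subst hj; by_cases hi : i = L <;> simp [hi]
      · by_cases hi : i = L
        · subst hi; simp [hj]
        · simp only [Matrix.of_apply, hi, hj, if_false, ↓reduceIte]
          have h1 := h i j
          have h2 := h i L
          field_simp
          ring
    have step4 : Matrix.det (Matrix.of fun i j : Fin (n+1) =>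
            (if i = L then (1:ℂ) else (x i - y L)⁻¹) *
              ((if j = L then (1:ℂ) else (y j - y L)) *
                (if i = L then (if j = L then (1:ℂ) else 0)
                  else (if j = L then (1:ℂ) else (x i - y j)⁻¹))))
        = (∏ i : Fin (n+1), (if i = L then (1:ℂ) else (x i - y L)⁻¹)) *
          ((∏ j : Fin (n+1), (if j = L then (1:ℂ) else (y j - y L))) *
            Matrix.det (Matrix.of fun i j : Fin (n+1) =>
              (if i = L then (if j = L then (1:ℂ) else 0)
                else (if j = L then (1:ℂ) else (x i - y j)⁻¹)))) := by
      refine (Matrix.det_mul_column (fun i => if i = L then (1:ℂ) else (x i - y L)⁻¹)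
        (Matrix.of fun i j : Fin (n+1) => (if j = L then (1:ℂ) else (y j - y L)) *
          (if i = L then (if j = L then (1:ℂ) else 0)
            else (if j = L then (1:ℂ) else (x i - y j)⁻¹)))).trans ?_
      congr 1
      exact Matrix.det_mul_row (fun j => if j = L then (1:ℂ) else (y j - y L)) _
    -- Step 3: expand along the last row
    have step5 : Matrix.det (Matrix.of fun i j : Fin (n+1) =>
              (if i = L then (if j = L then (1:ℂ) else 0)
                else (if j = L then (1:ℂ) else (x i - y j)⁻¹)))
        = Matrix.det (Matrix.of fun i j : Fin n =>
            (x i.castSucc - y j.castSucc)⁻¹) := by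
      rw [Matrix.det_succ_row _ L]
      rw [Finset.sum_eq_single L]
      · have hsign : ((-1 : ℂ)) ^ ((L : ℕ) + (L : ℕ)) = 1 := by
          rw [← two_mul]; simp [pow_mul]
        rw [Fin.succAbove_last, hsign, one_mul]
        have he : ((Matrix.of fun i j : Fin (n+1) =>
              (if i = L then (if j = L then (1:ℂ) else 0)
                else (if j = L then (1:ℂ) else (x i - y j)⁻¹))).submatrix
              Fin.castSucc Fin.castSucc)
            = Matrix.of fun i j : Fin n => (x i.castSucc - y j.castSucc)⁻¹ := by
          ext i j
          simp [hL, (Fin.castSucc_lt_last i).ne, (Fin.castSucc_lt_last j).ne]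
        rw [he]
        simp
      · intro b _ hb
        simp [hb]
      · simp
    rw [step1, step2, step3, step4, step5, ih _ _ (fun j k => h _ _)]
    -- Now pure algebra with products
    rw [prod_ite_last, prod_ite_last, prod_ite_last, Finset.prod_inv_distrib]
    -- split RHS products
    rw [Fin.prod_univ_castSucc (f := fun j : Fin (n+1) =>
      ∏ k ∈ Finset.univ.filter (fun k => k < j), (x j - x k) * (y k - y j))]
    rw [Fin.prod_univ_castSucc (f := fun j : Fin (n+1) => ∏ k : Fin (n+1), (x j - y k))]
    have hnum1 : (∏ i : Fin n, ∏ k ∈ Finset.univ.filter (fun k => k < i.castSucc),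
          (x i.castSucc - x k) * (y k - y i.castSucc))
        = ∏ i : Fin n, ∏ k ∈ Finset.univ.filter (fun k => k < i),
            (x i.castSucc - x k.castSucc) * (y k.castSucc - y i.castSucc) :=
      Finset.prod_congr rfl fun i _ => prod_filter_lt_castSucc i _
    have hnum2 : (∏ k ∈ Finset.univ.filter (fun k => k < Fin.last n),
          (x (Fin.last n) - x k) * (y k - y (Fin.last n)))
        = ∏ k : Fin n, (x (Fin.last n) - x k.castSucc) * (y k.castSucc - y (Fin.last n)) :=
      prod_filter_lt_last _
    rw [hnum1, hnum2]
    rw [Fin.prod_univ_castSucc (f := fun k : Fin (n+1) => x L - y k)]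
    have hden1 : (∏ i : Fin n, ∏ k : Fin (n+1), (x i.castSucc - y k))
        = ∏ i : Fin n, ((∏ k : Fin n, (x i.castSucc - y k.castSucc)) * (x i.castSucc - y (Fin.last n))) :=
      Finset.prod_congr rfl fun i _ => Fin.prod_univ_castSucc _
    rw [hden1, Finset.prod_mul_distrib, Finset.prod_mul_distrib]
    have hDn : (∏ j : Fin n, ∏ k : Fin n, (x j.castSucc - y k.castSucc)) ≠ 0 :=
      Finset.prod_ne_zero_iff.mpr fun j _ =>
        Finset.prod_ne_zero_iff.mpr fun k _ => h _ _
    have ha : (∏ k : Fin n, (x L - y k.castSucc)) ≠ 0 :=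
      Finset.prod_ne_zero_iff.mpr fun k _ => h _ _
    have hb : x L - y L ≠ 0 := h _ _
    have hc : (∏ j : Fin n, (x j.castSucc - y L)) ≠ 0 :=
      Finset.prod_ne_zero_iff.mpr fun j _ => h _ _
    have hc' : ∀ j : Fin n, x j.castSucc - y L ≠ 0 := fun j => h _ _
    rw [Finset.prod_inv_distrib]
    simp only [← hL]
    field_simp

private lemma prod_square_split {n : ℕ} (g : Fin n → Fin n → ℂ) :
    (∏ j : Fin n, ∏ k : Fin n, g j k)
      = (∏ j : Fin n, g j j) *
        ∏ j : Fin n, ∏ k ∈ Finset.univ.filter (fun k => k < j), (g j k * g k j) := by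
  have hpart : ∀ j : Fin n, (∏ k : Fin n, g j k)
      = (∏ k ∈ Finset.univ.filter (fun k => k < j), g j k) *
        (g j j * ∏ k ∈ Finset.univ.filter (fun k => j < k), g j k) := by
    intro j
    rw [← Finset.prod_filter_mul_prod_filter_not Finset.univ (fun k => k < j) (g j)]
    congr 1
    have hins : Finset.univ.filter (fun k : Fin n => ¬ k < j)
        = insert j (Finset.univ.filter (fun k => j < k)) := by
      ext k
      simp only [Finset.mem_filter, Finset.mem_univ, true_and, Finset.mem_insert, Fin.lt_def,
        not_lt, Fin.ext_iff]
      omega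
    rw [hins, Finset.prod_insert (by simp)]
  have hswap : (∏ j : Fin n, ∏ k ∈ Finset.univ.filter (fun k => j < k), g j k)
      = ∏ j : Fin n, ∏ k ∈ Finset.univ.filter (fun k => k < j), g k j := by
    apply Finset.prod_comm' (f := g)
    intro a b
    simp
  calc (∏ j : Fin n, ∏ k : Fin n, g j k)
      = ∏ j : Fin n, ((∏ k ∈ Finset.univ.filter (fun k => k < j), g j k) *
          (g j j * ∏ k ∈ Finset.univ.filter (fun k => j < k), g j k)) :=
        Finset.prod_congr rfl fun j _ => hpart j
    _ = (∏ j : Fin n, ∏ k ∈ Finset.univ.filter (fun k => k < j), g j k) *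
        ((∏ j : Fin n, g j j) *
          ∏ j : Fin n, ∏ k ∈ Finset.univ.filter (fun k => j < k), g j k) := by
        rw [Finset.prod_mul_distrib, Finset.prod_mul_distrib]
    _ = (∏ j : Fin n, g j j) *
        ∏ j : Fin n, ∏ k ∈ Finset.univ.filter (fun k => k < j), (g j k * g k j) := by
        rw [hswap]
        simp only [Finset.prod_mul_distrib]
        ring

/-- Hyperbolic Cauchy determinant identity:
`det [1/sinh(x_j - y_k)] = ∏_{j>k} sinh(x_j-x_k) sinh(y_k-y_j) / ∏_{j,k} sinh(x_j-y_k)`. -/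
theorem stmt3 (n : ℕ) (hn : 1 ≤ n) (x y : Fin n → ℂ)
    (h : ∀ j k, Complex.sinh (x j - y k) ≠ 0) :
    Matrix.det (Matrix.of fun j k => 1 / Complex.sinh (x j - y k)) =
      (∏ j : Fin n, ∏ k ∈ Finset.univ.filter (fun k => k < j),
          Complex.sinh (x j - x k) * Complex.sinh (y k - y j)) /
        ∏ j : Fin n, ∏ k : Fin n, Complex.sinh (x j - y k) := by
  classical
  -- sinh in terms of exponentials
  have key : ∀ a b : ℂ, Complex.sinh (a - b)
      = (Complex.exp (2*a) - Complex.exp (2*b)) / (2 * Complex.exp a * Complex.exp b) := by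
    intro a b
    show (Complex.exp (a - b) - Complex.exp (-(a - b))) / 2 = _
    rw [neg_sub, Complex.exp_sub, Complex.exp_sub, two_mul a, two_mul b,
      Complex.exp_add, Complex.exp_add]
    have h1 := Complex.exp_ne_zero a
    have h2 := Complex.exp_ne_zero b
    rw [div_sub_div _ _ h2 h1, div_div]
    congr 1
    ring
  set X : Fin n → ℂ := fun j => Complex.exp (2 * x j) with hX
  set Y : Fin n → ℂ := fun k => Complex.exp (2 * y k) with hY
  have hg : ∀ a : ℂ, (2 : ℂ) * Complex.exp a ≠ 0 := fun a =>
    mul_ne_zero two_ne_zero (Complex.exp_ne_zero a)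
  have hXY : ∀ j k, X j - Y k ≠ 0 := by
    intro j k hc
    apply h j k
    rw [key, show Complex.exp (2 * x j) - Complex.exp (2 * y k) = 0 from hc, zero_div]
  -- the matrix as a scaled Cauchy matrix
  have hmat : (Matrix.of fun j k => 1 / Complex.sinh (x j - y k))
      = Matrix.of fun j k => (2 * Complex.exp (x j)) *
          (Complex.exp (y k) * (X j - Y k)⁻¹) := by
    ext j k
    rw [Matrix.of_apply, Matrix.of_apply, key, one_div, inv_div]
    rw [div_eq_mul_inv]
    ring
  have hd1 : Matrix.det (Matrix.of fun j k => (2 * Complex.exp (x j)) *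
        (Complex.exp (y k) * (X j - Y k)⁻¹))
      = (∏ j : Fin n, 2 * Complex.exp (x j)) *
        Matrix.det (Matrix.of fun j k => Complex.exp (y k) * (X j - Y k)⁻¹) :=
    Matrix.det_mul_column _ _
  have hd2 : Matrix.det (Matrix.of fun j k => Complex.exp (y k) * (X j - Y k)⁻¹)
      = (∏ k : Fin n, Complex.exp (y k)) *
        Matrix.det (Matrix.of fun j k => (X j - Y k)⁻¹) :=
    Matrix.det_mul_row _ _
  rw [hmat, hd1, hd2, cauchy_det n X Y hXY]
  -- rewrite the sinh products on the RHS
  set g : Fin n → Fin n → ℂ := fun j k => 2 * Complex.exp (x j) * Complex.exp (y k) with hgdef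
  have hgne : ∀ j k, g j k ≠ 0 := fun j k =>
    mul_ne_zero (hg _) (Complex.exp_ne_zero _)
  have hden : (∏ j : Fin n, ∏ k : Fin n, Complex.sinh (x j - y k))
      = (∏ j : Fin n, ∏ k : Fin n, (X j - Y k)) / (∏ j : Fin n, ∏ k : Fin n, g j k) := by
    rw [← Finset.prod_div_distrib]
    apply Finset.prod_congr rfl
    intro j _
    rw [← Finset.prod_div_distrib]
    apply Finset.prod_congr rfl
    intro k _
    rw [key, hgdef]
  have hnum : (∏ j : Fin n, ∏ k ∈ Finset.univ.filter (fun k => k < j),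
        Complex.sinh (x j - x k) * Complex.sinh (y k - y j))
      = (∏ j : Fin n, ∏ k ∈ Finset.univ.filter (fun k => k < j), (X j - X k) * (Y k - Y j)) /
        (∏ j : Fin n, ∏ k ∈ Finset.univ.filter (fun k => k < j), (g j k * g k j)) := by
    rw [← Finset.prod_div_distrib]
    apply Finset.prod_congr rfl
    intro j _
    rw [← Finset.prod_div_distrib]
    apply Finset.prod_congr rfl
    intro k _
    rw [key, key, hgdef, div_mul_div_comm]
    simp only []
    congr 1
    ring
  rw [hnum, hden]
  have hsplit := prod_square_split g
  have hW : (∏ j : Fin n, ∏ k ∈ Finset.univ.filter (fun k => k < j), (g j k * g k j)) ≠ 0 :=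
    Finset.prod_ne_zero_iff.mpr fun j _ =>
      Finset.prod_ne_zero_iff.mpr fun k _ => mul_ne_zero (hgne _ _) (hgne _ _)
  have hG : (∏ j : Fin n, ∏ k : Fin n, g j k) ≠ 0 :=
    Finset.prod_ne_zero_iff.mpr fun j _ =>
      Finset.prod_ne_zero_iff.mpr fun k _ => hgne _ _
  have hQ : (∏ j : Fin n, ∏ k : Fin n, (X j - Y k)) ≠ 0 :=
    Finset.prod_ne_zero_iff.mpr fun j _ =>
      Finset.prod_ne_zero_iff.mpr fun k _ => hXY _ _
  have hdiag : (∏ j : Fin n, g j j)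
      = (∏ j : Fin n, 2 * Complex.exp (x j)) * ∏ j : Fin n, Complex.exp (y j) := by
    rw [← Finset.prod_mul_distrib]
  rw [div_div_div_comm]
  rw [hsplit, hdiag] 
  field_simp
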